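/- Boundary estimate for cubes in ℤ^d: There exists a constant c with c < 3√2 such that the following holds for every dimension d ≥ 1. Let m > 1 be an integer, n = 2m+1, a ∈ ℤ^d, and let B = {x ∈ ℤ^d : |x_i − a_i| ≤ m for all i} be the cube of side n centred at a. Then for every v : ℤ^d → ℝ and every i ∈ {1,…,d}: Σ_{x∈∂_i^+ B} v(x)² ≤ c·( n^{−1}·Σ_{x∈B} v(x)² + n·Σ_{x∈B} (∇_i v(x))² ) and Σ_{x∈∂_i^− B} v(x)² ≤ c·( n^{−1}·Σ_{x∈B} v(x)² + n·Σ_{x∈B} (∇_i^* v(x))² ). -/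

import Mathlib

/-- Points of the lattice `ℤ^d`. -/
abbrev LatticePt (d : ℕ) := Fin d → ℤ

/-- Discrete derivative `∇ᵢv(x) = v(x+eᵢ) − v(x)`. -/
def gradPlus {d : ℕ} (i : Fin d) (v : LatticePt d → ℝ) (x : LatticePt d) : ℝ :=
  v (x + Pi.single i 1) - v x

/-- Discrete derivative `∇ᵢ*v(x) = v(x−eᵢ) − v(x)`. -/
def gradMinus {d : ℕ} (i : Fin d) (v : LatticePt d → ℝ) (x : LatticePt d) : ℝ :=
  v (x - Pi.single i 1) - v x

/-- The cube `B = {x ∈ ℤ^d : |xᵢ − aᵢ| ≤ m ∀i}` of side `n = 2m+1` centred at `a`. -/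
noncomputable def cubeAt (d m : ℕ) (a : LatticePt d) : Finset (LatticePt d) :=
  Fintype.piFinset fun j => Finset.Icc (a j - (m : ℤ)) (a j + (m : ℤ))

/-- `∂ᵢ⁻B = {x : (x ∉ B ∧ x+eᵢ ∈ B) ∨ (x ∈ B ∧ x+eᵢ ∉ B)}`. -/
def bdryMinus {d : ℕ} (B : Finset (LatticePt d)) (i : Fin d) : Finset (LatticePt d) :=
  (B ∪ B.image fun x => x - Pi.single i 1).filter fun x =>
    (x ∉ B ∧ x + Pi.single i 1 ∈ B) ∨ (x ∈ B ∧ x + Pi.single i 1 ∉ B)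

/-- `∂ᵢ⁺B = ∂ᵢ⁻B + eᵢ`. -/
def bdryPlus {d : ℕ} (B : Finset (LatticePt d)) (i : Fin d) : Finset (LatticePt d) :=
  (bdryMinus B i).image fun x => x + Pi.single i 1

-- 1D lemmas
private lemma telescope_sum (f : ℤ → ℝ) (A : ℤ) :
    ∀ k, A ≤ k → ∑ t ∈ Finset.Ico A k, (f (t + 1) - f t) = f k - f A :=
  Int.le_induction (by simp)
    (fun k hk ih => by
      rw [show Finset.Ico A (k + 1) = insert k (Finset.Ico A k) by
            ext t; simp only [Finset.mem_Ico, Finset.mem_insert]; omega,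
        Finset.sum_insert (by simp [Finset.mem_Ico]), ih]
      ring)

private lemma oneD (A B : ℤ) (hAB : A ≤ B) (f : ℤ → ℝ) (n : ℝ)
    (hn : n = (B : ℝ) - A + 1) :
    f A ^ 2 + f (B + 1) ^ 2 ≤
      4 * (n⁻¹ * ∑ t ∈ Finset.Icc A B, f t ^ 2 +
        n * ∑ t ∈ Finset.Icc A B, (f (t + 1) - f t) ^ 2) := by
  have hn0 : (0:ℝ) < n := by
    rw [hn]; have : (A:ℝ) ≤ B := by exact_mod_cast hAB
    linarith
  set S := ∑ t ∈ Finset.Icc A B, f t ^ 2 with hS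
  set G := ∑ t ∈ Finset.Icc A B, (f (t + 1) - f t) ^ 2 with hG
  have hGnn : 0 ≤ G := Finset.sum_nonneg fun _ _ => sq_nonneg _
  have hSnn : 0 ≤ S := Finset.sum_nonneg fun _ _ => sq_nonneg _
  have hcard : ((Finset.Icc A B).card : ℝ) = n := by
    rw [Int.card_Icc, hn]
    have h1 : (0:ℤ) ≤ B + 1 - A := by omega
    rw [show ((B + 1 - A).toNat : ℝ) = ((((B + 1 - A).toNat : ℤ)) : ℝ) by push_cast; ring,
      Int.toNat_of_nonneg h1]
    push_cast; ring
  have key : ∀ k ∈ Finset.Icc A B,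
      f A ^ 2 + f (B + 1) ^ 2 ≤ 4 * f k ^ 2 + 4 * n * G := by
    intro k hk
    rw [Finset.mem_Icc] at hk
    -- bound for f A
    have h1 : f k - f A = ∑ t ∈ Finset.Ico A k, (f (t + 1) - f t) :=
      (telescope_sum f A k hk.1).symm
    have h2 : (f k - f A) ^ 2 ≤ n * G := by
      rw [h1]
      calc (∑ t ∈ Finset.Ico A k, (f (t + 1) - f t)) ^ 2
          ≤ (Finset.Ico A k).card * ∑ t ∈ Finset.Ico A k, (f (t + 1) - f t) ^ 2 :=
            sq_sum_le_card_mul_sum_sq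
        _ ≤ n * G := by
            apply mul_le_mul
            · rw [Int.card_Ico, hn]
              have h3 : (0:ℤ) ≤ k - A := by omega
              rw [show (((k - A).toNat : ℕ) : ℝ) = (((k - A).toNat : ℤ) : ℝ) by push_cast; ring,
                Int.toNat_of_nonneg h3]
              have : ((k:ℝ)) ≤ (B:ℝ) := by exact_mod_cast hk.2
              have : ((A:ℝ)) ≤ (k:ℝ) := by exact_mod_cast hk.1
              push_cast; linarith
            · apply Finset.sum_le_sum_of_subset_of_nonneg
              · intro t ht; rw [Finset.mem_Ico] at ht; rw [Finset.mem_Icc]; omega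
              · intro _ _ _; exact sq_nonneg _
            · exact Finset.sum_nonneg fun _ _ => sq_nonneg _
            · linarith
    have h1' : f (B + 1) - f k = ∑ t ∈ Finset.Ico k (B + 1), (f (t + 1) - f t) := by
      have := telescope_sum f k (B + 1) (by omega)
      linarith [this]
    have h2' : (f (B + 1) - f k) ^ 2 ≤ n * G := by
      rw [h1']
      calc (∑ t ∈ Finset.Ico k (B + 1), (f (t + 1) - f t)) ^ 2
          ≤ (Finset.Ico k (B + 1)).card * ∑ t ∈ Finset.Ico k (B + 1), (f (t + 1) - f t) ^ 2 :=
            sq_sum_le_card_mul_sum_sq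
        _ ≤ n * G := by
            apply mul_le_mul
            · rw [Int.card_Ico, hn]
              have h3 : (0:ℤ) ≤ B + 1 - k := by omega
              rw [show (((B + 1 - k).toNat : ℕ) : ℝ) = (((B + 1 - k).toNat : ℤ) : ℝ) by
                  push_cast; ring,
                Int.toNat_of_nonneg h3]
              have : ((A:ℝ)) ≤ (k:ℝ) := by exact_mod_cast hk.1
              push_cast; linarith
            · apply Finset.sum_le_sum_of_subset_of_nonneg
              · intro t ht; rw [Finset.mem_Ico] at ht; rw [Finset.mem_Icc]; omega
              · intro _ _ _; exact sq_nonneg _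
            · exact Finset.sum_nonneg fun _ _ => sq_nonneg _
            · linarith
    nlinarith [sq_nonneg (f k + (f k - f A)), sq_nonneg (f k + (f (B + 1) - f k))]
  have hsum := Finset.sum_le_sum key
  rw [Finset.sum_const, Finset.sum_add_distrib, Finset.sum_const, ← Finset.mul_sum] at hsum
  have hsum' : n * (f A ^ 2 + f (B + 1) ^ 2) ≤ 4 * S + 4 * n * G * n := by
    have := hsum
    rw [nsmul_eq_mul, nsmul_eq_mul, hcard] at this
    linarith
  have hT : n * (4 * (n⁻¹ * S + n * G)) = 4 * S + 4 * n * G * n := by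
    field_simp
  have := hsum'.trans_eq hT.symm
  exact le_of_mul_le_mul_left this hn0

private lemma oneD' (A B : ℤ) (hAB : A ≤ B) (f : ℤ → ℝ) (n : ℝ)
    (hn : n = (B : ℝ) - A + 1) :
    f (A - 1) ^ 2 + f B ^ 2 ≤
      4 * (n⁻¹ * ∑ t ∈ Finset.Icc A B, f t ^ 2 +
        n * ∑ t ∈ Finset.Icc A B, (f (t - 1) - f t) ^ 2) := by
  have h := oneD A B hAB (fun t => f (A + B - t)) n hn
  beta_reduce at h
  rw [show A + B - A = B by ring, show A + B - (B + 1) = A - 1 by ring] at h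
  have e1 : ∑ t ∈ Finset.Icc A B, f (A + B - t) ^ 2 = ∑ t ∈ Finset.Icc A B, f t ^ 2 := by
    apply Finset.sum_nbij' (fun t => A + B - t) (fun t => A + B - t)
    · intro t ht; rw [Finset.mem_Icc] at *; omega
    · intro t ht; rw [Finset.mem_Icc] at *; omega
    · intro t _; ring
    · intro t _; ring
    · intro t _; rfl
  have e2 : ∑ t ∈ Finset.Icc A B, (f (A + B - (t + 1)) - f (A + B - t)) ^ 2
      = ∑ t ∈ Finset.Icc A B, (f (t - 1) - f t) ^ 2 := by
    apply Finset.sum_nbij' (fun t => A + B - t) (fun t => A + B - t)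
    · intro t ht; rw [Finset.mem_Icc] at *; omega
    · intro t ht; rw [Finset.mem_Icc] at *; omega
    · intro t _; ring
    · intro t _; ring
    · intro t _
      rw [show A + B - (t + 1) = A + B - t - 1 by ring]
  rw [e1, e2] at h
  linarith

section MultiD

variable {d : ℕ}

private lemma mem_cube {m : ℕ} {a x : LatticePt d} :
    x ∈ cubeAt d m a ↔ ∀ j, a j - (m:ℤ) ≤ x j ∧ x j ≤ a j + (m:ℤ) := by
  simp [cubeAt, Fintype.mem_piFinset, Finset.mem_Icc]

private lemma add_single_apply (i : Fin d) (x : LatticePt d) (j : Fin d) :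
    (x + Pi.single i 1 : LatticePt d) j = if j = i then x j + 1 else x j := by
  rcases eq_or_ne j i with rfl | h
  · simp
  · simp [Pi.single_eq_of_ne h, h]

private lemma sub_single_apply (i : Fin d) (x : LatticePt d) (j : Fin d) :
    (x - Pi.single i 1 : LatticePt d) j = if j = i then x j - 1 else x j := by
  rcases eq_or_ne j i with rfl | h
  · simp
  · simp [Pi.single_eq_of_ne h, h]

private lemma update_add (i : Fin d) (y : LatticePt d) (t : ℤ) :
    Function.update y i t + Pi.single i 1 = Function.update y i (t + 1) := by
  funext j
  rcases eq_or_ne j i with rfl | h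
  · simp
  · simp [Function.update_of_ne h, Pi.single_eq_of_ne h]

private lemma update_sub (i : Fin d) (y : LatticePt d) (t : ℤ) :
    Function.update y i t - Pi.single i 1 = Function.update y i (t - 1) := by
  funext j
  rcases eq_or_ne j i with rfl | h
  · simp
  · simp [Function.update_of_ne h, Pi.single_eq_of_ne h]

private lemma mem_bdryMinus_iff {B : Finset (LatticePt d)} {i : Fin d} {x : LatticePt d} :
    x ∈ bdryMinus B i ↔
      ((x ∉ B ∧ x + Pi.single i 1 ∈ B) ∨ (x ∈ B ∧ x + Pi.single i 1 ∉ B)) := by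
  simp only [bdryMinus, Finset.mem_filter, Finset.mem_union, Finset.mem_image]
  constructor
  · exact fun h => h.2
  · intro h
    refine ⟨?_, h⟩
    rcases h with ⟨_, h2⟩ | ⟨h1, _⟩
    · exact Or.inr ⟨x + Pi.single i 1, h2, by ring⟩
    · exact Or.inl h1

private lemma mem_bdryMinus_cube {m : ℕ} {a : LatticePt d} {i : Fin d} {x : LatticePt d} :
    x ∈ bdryMinus (cubeAt d m a) i ↔
      ((∀ j, j ≠ i → a j - (m:ℤ) ≤ x j ∧ x j ≤ a j + (m:ℤ)) ∧
        (x i = a i + m ∨ x i = a i - m - 1)) := by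
  rw [mem_bdryMinus_iff]
  simp only [mem_cube]
  constructor
  · rintro (⟨h1, h2⟩ | ⟨h1, h2⟩)
    · have hxi1 := h2 i
      rw [add_single_apply, if_pos rfl] at hxi1
      refine ⟨fun j' hj' => ?_, Or.inr ?_⟩
      · have := h2 j'; rwa [add_single_apply, if_neg hj'] at this
      · have hxi : ¬ (a i - (m:ℤ) ≤ x i ∧ x i ≤ a i + (m:ℤ)) := by
          intro hc
          apply h1
          intro j
          rcases eq_or_ne j i with rfl | hne
          · exact hc
          · have := h2 j; rwa [add_single_apply, if_neg hne] at this
        omega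
    · have hxi := h1 i
      refine ⟨fun j' _ => h1 j', Or.inl ?_⟩
      have hxi1 : ¬ (a i - (m:ℤ) ≤ x i + 1 ∧ x i + 1 ≤ a i + (m:ℤ)) := by
        intro hc
        apply h2
        intro j
        rcases eq_or_ne j i with rfl | hne
        · rw [add_single_apply, if_pos rfl]; exact hc
        · rw [add_single_apply, if_neg hne]; exact h1 j
      omega
  · rintro ⟨ho, hi | hi⟩
    · right
      constructor
      · intro j
        rcases eq_or_ne j i with rfl | hne
        · omega
        · exact ho j hne
      · intro hc
        have := hc i
        rw [add_single_apply, if_pos rfl] at this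
        omega
    · left
      constructor
      · intro hc
        have := hc i
        omega
      · intro j
        rcases eq_or_ne j i with rfl | hne
        · rw [add_single_apply, if_pos rfl]; omega
        · rw [add_single_apply, if_neg hne]; exact ho j hne

private lemma mem_bdryPlus_cube {m : ℕ} {a : LatticePt d} {i : Fin d} {x : LatticePt d} :
    x ∈ bdryPlus (cubeAt d m a) i ↔
      ((∀ j, j ≠ i → a j - (m:ℤ) ≤ x j ∧ x j ≤ a j + (m:ℤ)) ∧
        (x i = a i + m + 1 ∨ x i = a i - m)) := by
  simp only [bdryPlus, Finset.mem_image]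
  constructor
  · rintro ⟨y, hy, rfl⟩
    rw [mem_bdryMinus_cube] at hy
    refine ⟨fun j hj => ?_, ?_⟩
    · rw [add_single_apply, if_neg hj]; exact hy.1 j hj
    · rw [add_single_apply, if_pos rfl]
      rcases hy.2 with h | h
      · left; omega
      · right; omega
  · rintro ⟨ho, hx⟩
    refine ⟨x - Pi.single i 1, ?_, by ring⟩
    rw [mem_bdryMinus_cube]
    refine ⟨fun j hj => ?_, ?_⟩
    · rw [sub_single_apply, if_neg hj]; exact ho j hj
    · rw [sub_single_apply, if_pos rfl]
      rcases hx with h | h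
      · left; omega
      · right; omega

private lemma sum_cube (m : ℕ) (a : LatticePt d) (i : Fin d) (F : LatticePt d → ℝ) :
    ∑ x ∈ cubeAt d m a, F x =
      ∑ y ∈ (cubeAt d m a).filter (fun y => y i = a i),
        ∑ s ∈ Finset.Icc (a i - (m:ℤ)) (a i + (m:ℤ)), F (Function.update y i s) := by
  rw [← Finset.sum_fiberwise_of_maps_to (t := (cubeAt d m a).filter (fun y => y i = a i))
      (g := fun x => Function.update x i (a i)) ?_ F]
  · apply Finset.sum_congr rfl
    intro y hy
    rw [Finset.mem_filter, mem_cube] at hy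
    rw [show ((cubeAt d m a).filter (fun x => Function.update x i (a i) = y))
        = (Finset.Icc (a i - (m:ℤ)) (a i + (m:ℤ))).image (fun s => Function.update y i s)
        from ?_]
    · rw [Finset.sum_image]
      intro s _ s' _ h
      have := congrFun h i
      simpa using this
    · ext x
      rw [Finset.mem_filter, Finset.mem_image, mem_cube]
      constructor
      · rintro ⟨h1, h2⟩
        refine ⟨x i, by rw [Finset.mem_Icc]; exact h1 i, ?_⟩
        funext j
        rcases eq_or_ne j i with rfl | hne
        · rw [Function.update_self]
        · rw [Function.update_of_ne hne, ← h2, Function.update_of_ne hne]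
      · rintro ⟨s, hs, rfl⟩
        rw [Finset.mem_Icc] at hs
        constructor
        · intro j
          rcases eq_or_ne j i with rfl | hne
          · rw [Function.update_self]; exact hs
          · rw [Function.update_of_ne hne]; exact hy.1 j
        · rw [Function.update_idem, ← hy.2, Function.update_eq_self]
  · intro x hx
    rw [Finset.mem_filter, mem_cube]
    rw [mem_cube] at hx
    beta_reduce
    refine ⟨fun j => ?_, Function.update_self i (a i) x⟩
    rcases eq_or_ne j i with rfl | hne
    · rw [Function.update_self]; omega
    · rw [Function.update_of_ne hne]; exact hx j

private lemma sum_bdry (m : ℕ) (a : LatticePt d) (i : Fin d) (S : Finset (LatticePt d))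
    (b1 b2 : ℤ)
    (hchar : ∀ x : LatticePt d, x ∈ S ↔
      ((∀ j, j ≠ i → a j - (m:ℤ) ≤ x j ∧ x j ≤ a j + (m:ℤ)) ∧ (x i = b1 ∨ x i = b2)))
    (hb : b1 ≠ b2) (F : LatticePt d → ℝ) :
    ∑ x ∈ S, F x = ∑ y ∈ (cubeAt d m a).filter (fun y => y i = a i),
      (F (Function.update y i b1) + F (Function.update y i b2)) := by
  rw [← Finset.sum_fiberwise_of_maps_to (t := (cubeAt d m a).filter (fun y => y i = a i))
      (g := fun x => Function.update x i (a i)) ?_ F]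
  · apply Finset.sum_congr rfl
    intro y hy
    rw [Finset.mem_filter, mem_cube] at hy
    rw [show (S.filter (fun x => Function.update x i (a i) = y))
        = {Function.update y i b1, Function.update y i b2} from ?_]
    · rw [Finset.sum_pair]
      intro h
      have := congrFun h i
      rw [Function.update_self, Function.update_self] at this
      exact hb this
    · ext x
      rw [Finset.mem_filter, hchar, Finset.mem_insert, Finset.mem_singleton]
      constructor
      · rintro ⟨⟨_, hi⟩, h2⟩
        have hx : x = Function.update y i (x i) := by
          funext j
          rcases eq_or_ne j i with rfl | hne
          · rw [Function.update_self]
          · rw [Function.update_of_ne hne, ← h2, Function.update_of_ne hne]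
        rcases hi with h | h
        · left; rw [hx, h]
        · right; rw [hx, h]
      · intro h
        have key : ∀ b : ℤ, (b = b1 ∨ b = b2) → x = Function.update y i b →
            ((∀ j, j ≠ i → a j - (m:ℤ) ≤ x j ∧ x j ≤ a j + (m:ℤ)) ∧ (x i = b1 ∨ x i = b2))
              ∧ Function.update x i (a i) = y := by
          rintro b hb' rfl
          refine ⟨⟨fun j hne => ?_, ?_⟩, ?_⟩
          · rw [Function.update_of_ne hne]; exact hy.1 j
          · rw [Function.update_self]; exact hb'
          · rw [Function.update_idem, ← hy.2, Function.update_eq_self]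
        rcases h with h | h
        · exact key b1 (Or.inl rfl) h
        · exact key b2 (Or.inr rfl) h
  · intro x hx
    rw [hchar] at hx
    rw [Finset.mem_filter, mem_cube]
    beta_reduce
    refine ⟨fun j => ?_, Function.update_self i (a i) x⟩
    rcases eq_or_ne j i with rfl | hne
    · rw [Function.update_self]; omega
    · rw [Function.update_of_ne hne]; exact hx.1 j hne

end MultiD

/-- Boundary estimate for cubes in `ℤ^d`, with a universal constant `c < 3√2`. -/
theorem boundary_estimate_cubes :
    ∃ c : ℝ, c < 3 * Real.sqrt 2 ∧
      ∀ d : ℕ, 1 ≤ d → ∀ m : ℕ, 1 < m →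
        ∀ (a : LatticePt d) (v : LatticePt d → ℝ) (i : Fin d),
          (∑ x ∈ bdryPlus (cubeAt d m a) i, v x ^ 2 ≤
            c * ((2 * (m : ℝ) + 1)⁻¹ * ∑ x ∈ cubeAt d m a, v x ^ 2 +
              (2 * (m : ℝ) + 1) * ∑ x ∈ cubeAt d m a, gradPlus i v x ^ 2)) ∧
          (∑ x ∈ bdryMinus (cubeAt d m a) i, v x ^ 2 ≤
            c * ((2 * (m : ℝ) + 1)⁻¹ * ∑ x ∈ cubeAt d m a, v x ^ 2 +
              (2 * (m : ℝ) + 1) * ∑ x ∈ cubeAt d m a, gradMinus i v x ^ 2)) := by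
  refine ⟨4, ?_, ?_⟩
  · have h2 : (4 / 3 : ℝ) < Real.sqrt 2 := by
      rw [show (4 / 3 : ℝ) = Real.sqrt ((4 / 3) ^ 2) by
        rw [Real.sqrt_sq (by norm_num)]]
      apply Real.sqrt_lt_sqrt (by positivity)
      norm_num
    linarith
  · intro d _ m _ a v i
    have hAB : a i - (m : ℤ) ≤ a i + (m : ℤ) := by omega
    have hn : (2 * (m : ℝ) + 1) = ((a i + (m : ℤ) : ℤ) : ℝ) - ((a i - (m : ℤ) : ℤ) : ℝ) + 1 := by
      push_cast; ring
    constructor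
    · rw [sum_bdry m a i (bdryPlus (cubeAt d m a) i) (a i + (m : ℤ) + 1) (a i - (m : ℤ))
          (fun x => mem_bdryPlus_cube) (by omega) (fun x => v x ^ 2),
        sum_cube m a i (fun x => v x ^ 2), sum_cube m a i (fun x => gradPlus i v x ^ 2)]
      calc ∑ y ∈ (cubeAt d m a).filter (fun y => y i = a i),
            ((fun x => v x ^ 2) (Function.update y i (a i + (m : ℤ) + 1)) +
              (fun x => v x ^ 2) (Function.update y i (a i - (m : ℤ))))
          ≤ ∑ y ∈ (cubeAt d m a).filter (fun y => y i = a i),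
            (4 * ((2 * (m : ℝ) + 1)⁻¹ *
                ∑ s ∈ Finset.Icc (a i - (m : ℤ)) (a i + (m : ℤ)),
                  (fun x => v x ^ 2) (Function.update y i s) +
              (2 * (m : ℝ) + 1) *
                ∑ s ∈ Finset.Icc (a i - (m : ℤ)) (a i + (m : ℤ)),
                  (fun x => gradPlus i v x ^ 2) (Function.update y i s))) := by
            apply Finset.sum_le_sum
            intro y _
            have h := oneD (a i - (m : ℤ)) (a i + (m : ℤ)) hAB
              (fun s => v (Function.update y i s)) (2 * (m : ℝ) + 1) hn
            beta_reduce at h ⊢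
            have hg : ∑ s ∈ Finset.Icc (a i - (m : ℤ)) (a i + (m : ℤ)),
                (v (Function.update y i (s + 1)) - v (Function.update y i s)) ^ 2
                = ∑ s ∈ Finset.Icc (a i - (m : ℤ)) (a i + (m : ℤ)),
                  gradPlus i v (Function.update y i s) ^ 2 :=
              Finset.sum_congr rfl fun s _ => by rw [gradPlus, update_add]
            rw [hg] at h
            linarith
        _ = 4 * ((2 * (m : ℝ) + 1)⁻¹ *
                ∑ y ∈ (cubeAt d m a).filter (fun y => y i = a i),
                  ∑ s ∈ Finset.Icc (a i - (m : ℤ)) (a i + (m : ℤ)),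
                    (fun x => v x ^ 2) (Function.update y i s) +
              (2 * (m : ℝ) + 1) *
                ∑ y ∈ (cubeAt d m a).filter (fun y => y i = a i),
                  ∑ s ∈ Finset.Icc (a i - (m : ℤ)) (a i + (m : ℤ)),
                    (fun x => gradPlus i v x ^ 2) (Function.update y i s)) := by
            rw [← Finset.mul_sum, Finset.sum_add_distrib, ← Finset.mul_sum, ← Finset.mul_sum]
    · rw [sum_bdry m a i (bdryMinus (cubeAt d m a) i) (a i + (m : ℤ)) (a i - (m : ℤ) - 1)
          (fun x => mem_bdryMinus_cube) (by omega) (fun x => v x ^ 2),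
        sum_cube m a i (fun x => v x ^ 2), sum_cube m a i (fun x => gradMinus i v x ^ 2)]
      calc ∑ y ∈ (cubeAt d m a).filter (fun y => y i = a i),
            ((fun x => v x ^ 2) (Function.update y i (a i + (m : ℤ))) +
              (fun x => v x ^ 2) (Function.update y i (a i - (m : ℤ) - 1)))
          ≤ ∑ y ∈ (cubeAt d m a).filter (fun y => y i = a i),
            (4 * ((2 * (m : ℝ) + 1)⁻¹ *
                ∑ s ∈ Finset.Icc (a i - (m : ℤ)) (a i + (m : ℤ)),
                  (fun x => v x ^ 2) (Function.update y i s) +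
              (2 * (m : ℝ) + 1) *
                ∑ s ∈ Finset.Icc (a i - (m : ℤ)) (a i + (m : ℤ)),
                  (fun x => gradMinus i v x ^ 2) (Function.update y i s))) := by
            apply Finset.sum_le_sum
            intro y _
            have h := oneD' (a i - (m : ℤ)) (a i + (m : ℤ)) hAB
              (fun s => v (Function.update y i s)) (2 * (m : ℝ) + 1) hn
            beta_reduce at h ⊢
            have hg : ∑ s ∈ Finset.Icc (a i - (m : ℤ)) (a i + (m : ℤ)),
                (v (Function.update y i (s - 1)) - v (Function.update y i s)) ^ 2
                = ∑ s ∈ Finset.Icc (a i - (m : ℤ)) (a i + (m : ℤ)),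
                  gradMinus i v (Function.update y i s) ^ 2 :=
              Finset.sum_congr rfl fun s _ => by rw [gradMinus, update_sub]
            rw [hg] at h
            linarith
        _ = 4 * ((2 * (m : ℝ) + 1)⁻¹ *
                ∑ y ∈ (cubeAt d m a).filter (fun y => y i = a i),
                  ∑ s ∈ Finset.Icc (a i - (m : ℤ)) (a i + (m : ℤ)),
                    (fun x => v x ^ 2) (Function.update y i s) +
              (2 * (m : ℝ) + 1) *
                ∑ y ∈ (cubeAt d m a).filter (fun y => y i = a i),
                  ∑ s ∈ Finset.Icc (a i - (m : ℤ)) (a i + (m : ℤ)),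
                    (fun x => gradMinus i v x ^ 2) (Function.update y i s)) := by
            rw [← Finset.mul_sum, Finset.sum_add_distrib, ← Finset.mul_sum, ← Finset.mul_sum]
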